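/- Let H and K be complex Hilbert spaces and f : H →L[ℂ] K a bounded linear map. Let |f| : H →L[ℂ] H denote the unique positive square root of f† ∘ f, and |f†| : K →L[ℂ] K the unique positive square root of f ∘ f†, where f† is the Hilbert space adjoint of f. Then |f†| ∘ f = f ∘ |f|. -/

import Mathlib

open Polynomial in
lemma my_commute_cfc {A : Type*} [CStarAlgebra A] {a b : A}
    (ha : IsSelfAdjoint a) (hb : Commute b a) (g : ℝ → ℝ) :
    Commute b (cfc g a) := by
  by_cases hg : ContinuousOn g (spectrum ℝ a)
  · rw [cfc_apply g a ha hg]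
    suffices hall : ∀ F : C(spectrum ℝ a, ℝ), Commute b (cfcHom ha F) from hall _
    intro F
    let S : Subalgebra ℝ C(spectrum ℝ a, ℝ) :=
      { carrier := {F | Commute b (cfcHom ha F)}
        mul_mem' := fun {x y} hx hy => by
          simpa only [Set.mem_setOf_eq, map_mul] using hx.mul_right hy
        add_mem' := fun {x y} hx hy => by
          simpa only [Set.mem_setOf_eq, map_add] using hx.add_right hy
        algebraMap_mem' := fun r => by
          show Commute b (cfcHom ha (algebraMap ℝ _ r))
          rw [AlgHomClass.commutes]
          exact (Algebra.commutes r b).symm }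
    have hXmem : (toContinuousMapOnAlgHom (spectrum ℝ a)) X ∈ S := by
      show Commute b (cfcHom ha _)
      have : (toContinuousMapOnAlgHom (spectrum ℝ a)) X
          = (ContinuousMap.id ℝ).restrict (spectrum ℝ a) := by
        ext x; simp
      rw [this, cfcHom_id ha]
      exact hb
    have hpoly : polynomialFunctions (spectrum ℝ a) ≤ S := by
      rw [polynomialFunctions.eq_adjoin_X]
      exact Algebra.adjoin_le (by simpa using hXmem)
    have hSclosed : IsClosed (S : Set C(spectrum ℝ a, ℝ)) := by
      have : (S : Set C(spectrum ℝ a, ℝ))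
          = {F | b * cfcHom ha F = cfcHom ha F * b} := rfl
      rw [this]
      exact isClosed_eq (by fun_prop) (by fun_prop)
    have := (polynomialFunctions (spectrum ℝ a)).topologicalClosure_minimal hpoly hSclosed
    rw [polynomialFunctions.topologicalClosure] at this
    exact this (by trivial)
  · rw [cfc_apply_of_not_continuousOn a hg]
    exact Commute.zero_right b


open ContinuousLinearMap

set_option maxHeartbeats 1000000 in
set_option synthInstance.maxHeartbeats 400000 in
/-- For a bounded linear map `f : H →L[ℂ] K` between complex Hilbert
spaces, if `aH` is the (unique) positive square root of `f† ∘ f` and `aK` is the (unique)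
positive square root of `f ∘ f†`, then `|f†| ∘ f = f ∘ |f|`, i.e. `aK ∘ f = f ∘ aH`. -/
theorem absoluteValue_commutes
    {H : Type*} [NormedAddCommGroup H] [InnerProductSpace ℂ H] [CompleteSpace H]
    {K : Type*} [NormedAddCommGroup K] [InnerProductSpace ℂ K] [CompleteSpace K]
    (f : H →L[ℂ] K)
    (aH : H →L[ℂ] H) (haH : aH.IsPositive)
    (haH2 : aH.comp aH = (ContinuousLinearMap.adjoint f).comp f)
    (aK : K →L[ℂ] K) (haK : aK.IsPositive)
    (haK2 : aK.comp aK = f.comp (ContinuousLinearMap.adjoint f)) :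
    aK.comp f = f.comp aH := by
  set E := WithLp 2 (H × K) with hE
  let e : E ≃L[ℂ] H × K := WithLp.prodContinuousLinearEquiv 2 ℂ H K
  let A : E →L[ℂ] E :=
    (e.symm : (H × K) →L[ℂ] E).comp ((aH.prodMap aK).comp (e : E →L[ℂ] H × K))
  let Xf : E →L[ℂ] E :=
    (e.symm : (H × K) →L[ℂ] E).comp
      (((inr ℂ H K).comp (f.comp (fst ℂ H K))).comp (e : E →L[ℂ] H × K))
  have hAapp : ∀ z : E, A z = e.symm (aH (e z).1, aK (e z).2) := fun z => rfl
  have hXapp : ∀ z : E, Xf z = e.symm (0, f (e z).1) := fun z => rfl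
  have heapp : ∀ w : H × K, e (e.symm w) = w := fun w => e.apply_symm_apply w
  -- A is positive
  have hA : A.IsPositive := by
    constructor
    · show (A : E →ₗ[ℂ] E).IsSymmetric
      intro u v
      show (inner ℂ (A u) v : ℂ) = inner ℂ u (A v)
      rw [hAapp, hAapp]
      have h1 := haH.1
      have h2 := haK.1
      show (inner ℂ (aH (e u).1) (e v).1 : ℂ) + inner ℂ (aK (e u).2) (e v).2
          = inner ℂ (e u).1 (aH (e v).1) + inner ℂ (e u).2 (aK (e v).2)
      exact congrArg₂ (· + ·) (h1 (e u).1 (e v).1) (h2 (e u).2 (e v).2)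
    · intro z
      have h1 := haH.2 (e z).1
      have h2 := haK.2 (e z).2
      show 0 ≤ RCLike.re (inner ℂ (A z) z : ℂ)
      rw [hAapp]
      show 0 ≤ RCLike.re ((inner ℂ (aH (e z).1) (e z).1 : ℂ) + inner ℂ (aK (e z).2) (e z).2)
      rw [map_add]
      exact add_nonneg h1 h2
  have hA0 : (0 : E →L[ℂ] E) ≤ A := (nonneg_iff_isPositive A).mpr hA
  -- Xf commutes with A * A
  have hcomm2 : Commute Xf (A * A) := by
    have h2 : ∀ x : H, aH (aH x) = ContinuousLinearMap.adjoint f (f x) := fun x =>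
      congrFun (congrArg DFunLike.coe haH2) x
    have h3 : ∀ y : K, aK (aK y) = f (ContinuousLinearMap.adjoint f y) := fun y =>
      congrFun (congrArg DFunLike.coe haK2) y
    refine ContinuousLinearMap.ext fun z => ?_
    show Xf (A (A z)) = A (A (Xf z))
    apply e.injective
    rw [hAapp, hAapp, hXapp, hXapp, hAapp, hAapp]
    simp only [heapp]
    refine Prod.ext ?_ ?_
    · simp [h2]
    · show f (aH (aH (e z).1)) = aK (aK (f (e z).1))
      rw [h2, h3]
  -- A * A is self-adjoint and nonneg
  have hAA_sa : IsSelfAdjoint (A * A) := by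
    have := hA.isSelfAdjoint
    rw [IsSelfAdjoint] at this ⊢
    rw [star_mul, this]
  have hAA0 : (0 : E →L[ℂ] E) ≤ A * A := by
    have := star_mul_self_nonneg A
    rwa [hA.isSelfAdjoint.star_eq] at this
  -- A = cfc Real.sqrt (A * A)
  have hsq : A = cfc Real.sqrt (A * A) := by
    have h1 : CFC.sqrt (A * A) = A := CFC.sqrt_unique rfl hA0
    have h2 : CFC.sqrt (A * A) = cfc Real.sqrt (A * A) := by
      refine CFC.sqrt_unique (a := A * A) (b := cfc Real.sqrt (A * A)) ?_ ?_
      · rw [← cfc_mul Real.sqrt Real.sqrt (A * A)]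
        have : cfc (fun x => Real.sqrt x * Real.sqrt x) (A * A)
            = cfc (fun x : ℝ => x) (A * A) := by
          apply cfc_congr
          intro x hx
          exact Real.mul_self_sqrt (spectrum_nonneg_of_nonneg hAA0 hx)
        rw [this, cfc_id' ℝ (A * A)]
      · exact cfc_nonneg fun x _ => Real.sqrt_nonneg x
    rw [← h2]
    exact h1.symm
  -- conclude Xf commutes with A
  have hcomm : Commute Xf A := by
    rw [hsq]
    exact my_commute_cfc hAA_sa hcomm2 Real.sqrt
  -- extract components
  refine ContinuousLinearMap.ext fun x => ?_
  have := congrFun (congrArg DFunLike.coe hcomm.symm.eq) (e.symm (x, 0))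
  have h5 : A (Xf (e.symm (x, 0))) = Xf (A (e.symm (x, 0))) := this
  rw [hAapp, hXapp, hAapp, hXapp] at h5
  simp only [heapp] at h5
  have h6 := congrArg (fun w => (e w).2) h5
  simp only [heapp] at h6
  exact h6
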